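/- Let N ≥ 1, let L be a real number, and let x = (x_1,…,x_{2N}) be positive reals satisfying the highest weight condition and Σ_{j=1}^{2N} x_j ≤ L. Apply Algorithm B to x, producing the data (μ^{(i)}, ν^{(i)})_{1≤i≤u}, the intermediate sequences y^{(i)}, and set λ^{(i)} := μ^{(1)} + ⋯ + μ^{(i)}. For each 1 ≤ i ≤ u, let the maximal runs of zeros of y^{(i)} begin at positions I^{(i)}_1 < ⋯ < I^{(i)}_{k^{(i)}}, and define the quantum numbers r^{(i)}_j := Σ_{l=1}^{I^{(i)}_j − 1} y^{(i)}_l. Define the vacancy numbers q_i := L − 2 Σ_{k=1}^{u} min(λ^{(i)}, λ^{(k)}) ν^{(k)}. Then for every 1 ≤ i ≤ u and every 1 ≤ j ≤ k^{(i)} one has 0 ≤ r^{(i)}_j ≤ q_i. -/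

import Mathlib

/-- A finite sequence of nonnegative reals (as a list, 0-indexed) satisfies the
*highest weight condition* if `∑_{i=1}^{k} (x_{2i-1} - x_{2i}) ≥ 0` for all `k`. -/
def HWC (l : List ℝ) : Prop :=
  ∀ k : ℕ, 2 * k ≤ l.length →
    0 ≤ ∑ j ∈ Finset.range k, (l.getD (2 * j) 0 - l.getD (2 * j + 1) 0)

/-- One pass of zero-elimination on a list of nonnegative reals whose first entry is
positive, processed with explicit fuel (fuel `≥` the length of the list always
suffices).  A trailing run of zeros is deleted together with, if its length is odd, the
positive entry immediately preceding it (returned as the second component); an interior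
run of zeros of even length is deleted; an interior run of zeros of odd length is merged
together with its positive neighbours `a, b` into the single entry `a + b`. -/
noncomputable def squashF : ℕ → List ℝ → List ℝ × ℝ
  | 0, _ => ([], 0)
  | _ + 1, [] => ([], 0)
  | fuel + 1, a :: rest =>
    let m := (rest.takeWhile (fun t => decide (t = 0))).length
    let r := rest.drop m
    if r = [] then (if Even m then ([a], 0) else ([], a))
    else if Even m then
      let p := squashF fuel (r.headI :: r.tail)
      (a :: p.1, p.2)
    else squashF fuel ((a + r.headI) :: r.tail)

/-- Delete the run of zeros at the left end of `y`, then eliminate all remaining runs of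
zeros; returns the resulting list together with the positive entry deleted at the right
end (`0` if no entry was deleted there). -/
noncomputable def contract (y : List ℝ) : List ℝ × ℝ :=
  let y' := y.drop ((y.takeWhile (fun t => decide (t = 0))).length)
  squashF y'.length y'

/-- The minimum entry of a nonempty list of reals. -/
noncomputable def minL (l : List ℝ) : ℝ := l.foldr min l.headI

/-- One step of Algorithm B: subtract the minimum `μ` from every entry and eliminate the
runs of zeros, the positive entry preceding an odd right-end run of zeros being simply
deleted. -/
noncomputable def stepB (x : List ℝ) : List ℝ :=
  (contract (x.map (fun t => t - minL x))).1

/-- `iterB x (i-1)` is the `i`-th sequence `x⁽ⁱ⁾` of Algorithm B (so `iterB x 0 = x`). -/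
noncomputable def iterB (x : List ℝ) : ℕ → List ℝ
  | 0 => x
  | i + 1 => stepB (iterB x i)

/-- `μ⁽ⁱ⁾`, the minimum entry of `x⁽ⁱ⁾` (1-indexed step `i`). -/
noncomputable def muI (x : List ℝ) (i : ℕ) : ℝ := minL (iterB x (i - 1))

/-- `y⁽ⁱ⁾ = x⁽ⁱ⁾ - μ⁽ⁱ⁾` (1-indexed step `i`). -/
noncomputable def yI (x : List ℝ) (i : ℕ) : List ℝ :=
  (iterB x (i - 1)).map (fun t => t - muI x i)

/-- `ν⁽ⁱ⁾ = N⁽ⁱ⁾ - N⁽ⁱ⁺¹⁾` (1-indexed step `i`). -/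
noncomputable def nuI (x : List ℝ) (i : ℕ) : ℕ :=
  (iterB x (i - 1)).length / 2 - (iterB x i).length / 2

/-- `λ⁽ⁱ⁾ = μ⁽¹⁾ + ⋯ + μ⁽ⁱ⁾`. -/
noncomputable def lamI (x : List ℝ) (i : ℕ) : ℝ :=
  ∑ j ∈ Finset.range i, minL (iterB x j)

/-- The number `u` of steps of Algorithm B: the least `u` with `x⁽ᵘ⁺¹⁾` empty. -/
noncomputable def uSteps (x : List ℝ) : ℕ := sInf {i | iterB x i = []}

/-- The (0-based) starting positions of the maximal runs of zeros of `y`. -/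
noncomputable def runStarts (y : List ℝ) : Finset ℕ :=
  (Finset.range y.length).filter
    (fun p => y.getD p 1 = 0 ∧ (p = 0 ∨ y.getD (p - 1) 1 ≠ 0))

/-- The vacancy number `q_i = L - 2 ∑_{k=1}^{u} min(λ⁽ⁱ⁾, λ⁽ᵏ⁾) ν⁽ᵏ⁾`. -/
noncomputable def vacancy (x : List ℝ) (L : ℝ) (i : ℕ) : ℝ :=
  L - 2 * ∑ k ∈ Finset.Icc 1 (uSteps x), min (lamI x i) (lamI x k) * (nuI x k : ℝ)

lemma foldr_min_le_init (b : ℝ) (l : List ℝ) : l.foldr min b ≤ b := by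
  induction l with
  | nil => simp
  | cons a t ih => simpa using Or.inr ih

lemma foldr_min_le_mem (b : ℝ) {l : List ℝ} {a : ℝ} (h : a ∈ l) : l.foldr min b ≤ a := by
  induction l with
  | nil => simp at h
  | cons c t ih =>
    rcases List.mem_cons.1 h with rfl | h
    · simpa using Or.inl le_rfl
    · simpa using Or.inr (ih h)

lemma foldr_min_mem (b : ℝ) (l : List ℝ) : l.foldr min b = b ∨ l.foldr min b ∈ l := by
  induction l with
  | nil => simp
  | cons c t ih =>
    rcases le_total c (t.foldr min b) with h | h
    · right; simp [min_eq_left h]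
    · rcases ih with h' | h'
      · left; rw [List.foldr_cons, min_eq_right h, h']
      · right; rw [List.foldr_cons, min_eq_right h]; exact List.mem_cons_of_mem _ h'

lemma minL_le {l : List ℝ} {a : ℝ} (h : a ∈ l) : minL l ≤ a := foldr_min_le_mem _ h

lemma minL_mem {l : List ℝ} (h : l ≠ []) : minL l ∈ l := by
  rcases foldr_min_mem l.headI l with h' | h'
  · rw [minL, h']; exact (by cases l with | nil => exact absurd rfl h | cons a t => exact List.mem_cons_self)
  · exact h'

lemma minL_nil : minL [] = 0 := rfl

lemma sum_map_sub (l : List ℝ) (c : ℝ) :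
    (l.map (fun t => t - c)).sum = l.sum - l.length * c := by
  induction l with
  | nil => simp
  | cons a t ih => simp [ih]; ring
lemma drop_takeWhile (P : ℝ → Bool) (l : List ℝ) :
    l.drop (l.takeWhile P).length = l.dropWhile P := by
  have h := List.takeWhile_append_dropWhile (p := P) (l := l)
  have h2 : (l.takeWhile P ++ l.dropWhile P).drop (l.takeWhile P).length = l.dropWhile P := List.drop_left
  rwa [h] at h2

lemma squash_spec : ∀ fuel (l : List ℝ), l.length ≤ fuel → (∀ t ∈ l, 0 ≤ t) →
    l.headI ≠ 0 →
    (squashF fuel l).1.sum + (squashF fuel l).2 = l.sum ∧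
    0 ≤ (squashF fuel l).2 ∧
    (∀ t ∈ (squashF fuel l).1, 0 < t) ∧
    (squashF fuel l).1.length ≤ l.length ∧
    ((0:ℝ) ∈ l → (squashF fuel l).1.length < l.length) := by
  intro fuel
  induction fuel with
  | zero =>
    intro l hlen _ hh
    interval_cases hl : l.length
    · exact absurd rfl (by rwa [List.length_eq_zero_iff.1 hl] at hh)
  | succ fuel ih =>
    intro l hlen hnn hh
    match l with
    | [] => exact absurd rfl hh
    | a :: rest =>
      have ha : 0 < a := lt_of_le_of_ne (hnn a (List.mem_cons_self)) (Ne.symm (by simpa using hh))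
      set P : ℝ → Bool := fun t => decide (t = 0) with hP
      set m := (rest.takeWhile P).length with hm
      have h1 : rest.drop m = rest.dropWhile P := drop_takeWhile P rest
      have htw : (rest.takeWhile P).sum = 0 := by
        apply List.sum_eq_zero
        intro t ht
        have := List.mem_takeWhile_imp ht
        simpa [hP] using this
      have hrsum : rest.sum = (rest.drop m).sum := by
        conv_lhs => rw [← List.takeWhile_append_dropWhile (p := P) (l := rest)]
        rw [List.sum_append, htw, h1, zero_add]
      have hmle : m ≤ rest.length := by
        rw [hm]; exact (List.takeWhile_sublist _).length_le
      have hlr : (rest.drop m).length = rest.length - m := List.length_drop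
      by_cases hre : rest.drop m = []
      · -- whole rest is zeros
        have hrest0 : ∀ t ∈ rest, t = 0 := by
          intro t ht
          have : t ∈ rest.takeWhile P ++ rest.dropWhile P := by
            rwa [List.takeWhile_append_dropWhile]
          rw [← h1, hre, List.append_nil] at this
          have := List.mem_takeWhile_imp this
          simpa [hP] using this
        have hsum0 : rest.sum = 0 := List.sum_eq_zero hrest0
        have hsq : squashF (fuel + 1) (a :: rest) =
            (if Even m then ([a], (0:ℝ)) else ([], a)) := by
          rw [squashF]; simp only [← hP, ← hm, if_pos hre]
        by_cases he : Even m
        · rw [hsq, if_pos he]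
          refine ⟨by simp [hsum0], le_rfl, by simpa using ha, by simp, ?_⟩
          intro h0
          have : (0:ℝ) ∈ rest := by
            rcases List.mem_cons.1 h0 with h | h
            · exact absurd h.symm (ne_of_gt ha)
            · exact h
          have : rest ≠ [] := List.ne_nil_of_mem this
          have : 1 ≤ rest.length := List.length_pos_iff.2 this
          simp; omega
        · rw [hsq, if_neg he]
          have hm1 : 1 ≤ m := by
            rcases Nat.eq_zero_or_pos m with h | h
            · exact absurd (h ▸ Even.zero) he
            · exact h
          exact ⟨by simp [hsum0], le_of_lt ha, by simp, by simp, fun _ => by simp⟩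
      · obtain ⟨b, rt, hbr⟩ := List.exists_cons_of_ne_nil hre
        have hbmem : ∀ t ∈ rest.drop m, t ∈ rest := fun t ht => List.drop_subset _ _ ht
        have hb0 : b ≠ 0 := by
          have hw : rest.dropWhile P ≠ [] := by rw [← h1]; exact hre
          have := List.head_dropWhile_not P hw
          have hbh : (rest.dropWhile P).head hw = b := by
            have h2 : (rest.dropWhile P).head? = some b := by rw [← h1, hbr]; rfl
            rw [List.head?_eq_head hw] at h2
            exact Option.some.inj h2
          rw [hbh] at this
          simpa [hP] using this
        have hbpos : 0 < b :=
          lt_of_le_of_ne (hnn b (List.mem_cons_of_mem _ (hbmem b (hbr ▸ List.mem_cons_self)))) (Ne.symm hb0)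
        have hrtmem : ∀ t ∈ rt, t ∈ rest := fun t ht =>
          hbmem t (hbr ▸ List.mem_cons_of_mem _ ht)
        have hrlen : rest.length = m + (1 + rt.length) := by
          have : (rest.drop m).length = 1 + rt.length := by rw [hbr]; simp; omega
          omega
        have hflen : rest.length ≤ fuel := by simpa using hlen
        by_cases he : Even m
        · have hsq : squashF (fuel + 1) (a :: rest) =
              (a :: (squashF fuel (b :: rt)).1, (squashF fuel (b :: rt)).2) := by
            rw [squashF]
            simp only [← hP, ← hm, if_neg hre, if_pos he, hbr]
            simp
          obtain ⟨ihsum, ihsnd, ihpos, ihlen, ihlt⟩ :=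
            ih (b :: rt) (by simp; omega) (by
              intro t ht
              rcases List.mem_cons.1 ht with rfl | ht
              · exact le_of_lt hbpos
              · exact hnn t (List.mem_cons_of_mem _ (hrtmem t ht)))
              (by simpa using hb0)
          have hsum' : (b :: rt).sum = rest.sum := by rw [hrsum, hbr]
          refine ⟨?_, by rw [hsq]; exact ihsnd, ?_, ?_, ?_⟩
          · rw [hsq]; simp only [List.sum_cons]
            rw [add_assoc, ihsum, hsum']
          · rw [hsq]; intro t ht
            rcases List.mem_cons.1 ht with rfl | ht
            · exact ha
            · exact ihpos t ht
          · rw [hsq]; simp only [List.length_cons]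
            have := ihlen; simp at this ⊢; omega
          · intro h0
            have h0r : (0:ℝ) ∈ rest := by
              rcases List.mem_cons.1 h0 with h | h
              · exact absurd h.symm (ne_of_gt ha)
              · exact h
            rw [hsq]; simp only [List.length_cons]
            rcases Nat.eq_zero_or_pos m with hm0 | hm0
            · have : rest.takeWhile P = [] := List.eq_nil_of_length_eq_zero (hm ▸ hm0)
              have hrr : rest = b :: rt := by
                conv_lhs => rw [← List.takeWhile_append_dropWhile (p := P) (l := rest)]
                rw [this, List.nil_append, ← h1, hbr]
              have : (0:ℝ) ∈ b :: rt := hrr ▸ h0r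
              have := ihlt this
              simp at this ⊢
              rw [hrr]; simp; omega
            · have := ihlen; simp at this ⊢; omega
        · have hsq : squashF (fuel + 1) (a :: rest) = squashF fuel ((a + b) :: rt) := by
            rw [squashF]
            simp only [← hP, ← hm, if_neg hre, if_neg he, hbr]
            simp
          have hm1 : 1 ≤ m := by
            rcases Nat.eq_zero_or_pos m with h | h
            · exact absurd (h ▸ Even.zero) he
            · exact h
          obtain ⟨ihsum, ihsnd, ihpos, ihlen, ihlt⟩ :=
            ih ((a + b) :: rt) (by simp; omega) (by
              intro t ht
              rcases List.mem_cons.1 ht with rfl | ht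
              · positivity
              · exact hnn t (List.mem_cons_of_mem _ (hrtmem t ht)))
              (by simp; positivity)
          have hsum' : ((a + b) :: rt).sum = a + rest.sum := by
            rw [hrsum, hbr]; simp; ring
          refine ⟨?_, by rw [hsq]; exact ihsnd,
            fun t ht => ihpos t (by rw [hsq] at ht; exact ht), ?_, fun _ => ?_⟩
          · rw [hsq, ihsum, hsum']; simp
          · rw [hsq]
            have := ihlen; simp at this ⊢; omega
          · rw [hsq]
            have := ihlen; simp at this ⊢; omega

lemma contract_spec (y : List ℝ) (hnn : ∀ t ∈ y, 0 ≤ t) :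
    (contract y).1.sum + (contract y).2 = y.sum ∧
    0 ≤ (contract y).2 ∧
    (∀ t ∈ (contract y).1, 0 < t) ∧
    (contract y).1.length ≤ y.length ∧
    (y ≠ [] → (0:ℝ) ∈ y → (contract y).1.length < y.length) := by
  set P : ℝ → Bool := fun t => decide (t = 0) with hP
  set m := (y.takeWhile P).length with hm
  have h1 : y.drop m = y.dropWhile P := drop_takeWhile P y
  have htw : (y.takeWhile P).sum = 0 := by
    apply List.sum_eq_zero
    intro t ht
    simpa [hP] using List.mem_takeWhile_imp ht
  have hysum : y.sum = (y.drop m).sum := by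
    conv_lhs => rw [← List.takeWhile_append_dropWhile (p := P) (l := y)]
    rw [List.sum_append, htw, h1, zero_add]
  have hmle : m ≤ y.length := by
    rw [hm]; exact (List.takeWhile_sublist _).length_le
  have hc : contract y = squashF (y.drop m).length (y.drop m) := by
    rw [contract]
  by_cases hye : y.drop m = []
  · rw [hc, hye]
    have hy0 : y.sum = 0 := by rw [hysum, hye]; simp
    have : squashF (0:ℕ) ([] : List ℝ) = ([], 0) := rfl
    simp only [List.length_nil, this]
    refine ⟨by simp [hy0], le_rfl, by simp, by simp, fun hy _ => ?_⟩
    simpa using List.length_pos_iff.2 hy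
  · have hh : (y.drop m).headI ≠ 0 := by
      obtain ⟨b, rt, hbr⟩ := List.exists_cons_of_ne_nil hye
      have hw : y.dropWhile P ≠ [] := by rw [← h1]; exact hye
      have h2 : (y.dropWhile P).head? = some b := by rw [← h1, hbr]; rfl
      have := List.head_dropWhile_not P hw
      rw [List.head?_eq_head hw] at h2
      rw [Option.some.inj h2] at this
      rw [hbr]
      simpa [hP] using this
    obtain ⟨hs, hsnd, hpos, hle, hlt⟩ :=
      squash_spec (y.drop m).length (y.drop m) le_rfl
        (fun t ht => hnn t (List.drop_subset _ _ ht)) hh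
    rw [← hc] at hs hsnd hpos hle hlt
    have hdl : (y.drop m).length = y.length - m := List.length_drop
    refine ⟨by rw [hs, hysum], hsnd, hpos, by omega, fun _ h0 => ?_⟩
    rcases Nat.eq_zero_or_pos m with hm0 | hm0
    · have h0' : (0:ℝ) ∈ y.drop m := by rw [hm0]; simpa using h0
      have := hlt h0'
      omega
    · omega

lemma stepB_pos (z : List ℝ) : ∀ t ∈ stepB z, 0 < t := by
  have := contract_spec (z.map (fun t => t - minL z)) ?_
  · exact this.2.2.1
  · intro t ht
    obtain ⟨s, hs, rfl⟩ := List.mem_map.1 ht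
    simpa using minL_le hs

lemma stepB_sum (z : List ℝ) : (stepB z).sum ≤ z.sum - z.length * minL z := by
  have h := contract_spec (z.map (fun t => t - minL z)) ?_
  · have := h.1
    have h2 := h.2.1
    rw [sum_map_sub] at this
    rw [stepB]
    simp at this ⊢
    linarith
  · intro t ht
    obtain ⟨s, hs, rfl⟩ := List.mem_map.1 ht
    simpa using minL_le hs

lemma stepB_len_le (z : List ℝ) : (stepB z).length ≤ z.length := by
  have h := contract_spec (z.map (fun t => t - minL z)) ?_
  · have := h.2.2.2.1
    simpa [stepB] using this
  · intro t ht
    obtain ⟨s, hs, rfl⟩ := List.mem_map.1 ht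
    simpa using minL_le hs

lemma stepB_len_lt (z : List ℝ) (hz : z ≠ []) : (stepB z).length < z.length := by
  have h := contract_spec (z.map (fun t => t - minL z)) ?_
  · have := h.2.2.2.2 (by simpa using hz)
      (List.mem_map.2 ⟨minL z, minL_mem hz, by simp⟩)
    simpa [stepB] using this
  · intro t ht
    obtain ⟨s, hs, rfl⟩ := List.mem_map.1 ht
    simpa using minL_le hs

lemma stepB_nil : stepB ([] : List ℝ) = [] := rfl

lemma iterB_len_anti (x : List ℝ) : ∀ a b, a ≤ b →
    (iterB x b).length ≤ (iterB x a).length := by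
  intro a b hab
  induction b with
  | zero => simp_all
  | succ b ih =>
    rcases Nat.lt_or_ge a (b+1) with h | h
    · exact le_trans (by rw [iterB]; exact stepB_len_le _) (ih (by omega))
    · have : a = b + 1 := by omega
      rw [this]

lemma iterB_empty_persist (x : List ℝ) (i : ℕ) (h : iterB x i = []) :
    ∀ k, iterB x (i + k) = [] := by
  intro k
  induction k with
  | zero => simpa using h
  | succ k ih => rw [← Nat.add_assoc, iterB, ih, stepB_nil]

lemma iterB_terminates (x : List ℝ) : ∀ n i, (iterB x i).length ≤ n →
    iterB x (i + n) = [] := by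
  intro n
  induction n with
  | zero => intro i h; simpa using List.length_eq_zero_iff.1 (Nat.le_zero.1 h)
  | succ n ih =>
    intro i h
    by_cases hz : iterB x i = []
    · exact iterB_empty_persist x i hz _
    · have : (iterB x (i+1)).length ≤ n := by
        have := stepB_len_lt (iterB x i) hz
        rw [iterB] at *
        omega
      have := ih (i+1) this
      rwa [show i + (n+1) = i + 1 + n by omega]

lemma uSteps_empty (x : List ℝ) : iterB x (uSteps x) = [] := by
  have h : iterB x x.length = [] := by simpa using iterB_terminates x x.length 0 le_rfl
  exact Nat.sInf_mem (⟨x.length, h⟩ : Set.Nonempty {i | iterB x i = []})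

lemma iterB_nonneg (x : List ℝ) (hx : ∀ t ∈ x, 0 < t) :
    ∀ i, ∀ t ∈ iterB x i, 0 ≤ t := by
  intro i
  cases i with
  | zero => exact fun t ht => le_of_lt (hx t ht)
  | succ i => exact fun t ht => le_of_lt (stepB_pos _ t ht)

lemma minL_iter_nonneg (x : List ℝ) (hx : ∀ t ∈ x, 0 < t) (i : ℕ) :
    0 ≤ minL (iterB x i) := by
  by_cases h : iterB x i = []
  · rw [h]; exact le_of_eq minL_nil.symm
  · exact iterB_nonneg x hx i _ (minL_mem h)

lemma sum_chain (x : List ℝ) : ∀ j, (iterB x j).sum ≤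
    x.sum - ∑ t ∈ Finset.range j, ((iterB x t).length : ℝ) * minL (iterB x t) := by
  intro j
  induction j with
  | zero => simp [iterB]
  | succ j ih =>
    have h := stepB_sum (iterB x j)
    rw [Finset.sum_range_succ]
    rw [show iterB x (j+1) = stepB (iterB x j) from rfl]
    linarith

lemma nu_sum (x : List ℝ) : ∀ d j, ∑ k ∈ Finset.Icc (j+1) (j+d), nuI x k
    = (iterB x j).length / 2 - (iterB x (j+d)).length / 2 := by
  intro d
  induction d with
  | zero => intro j; simp
  | succ d ih =>
    intro j
    rw [show j + (d+1) = (j+d) + 1 by omega,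
      Finset.sum_Icc_succ_top (by omega : j+1 ≤ j+d+1), ih j]
    have h1 := iterB_len_anti x j (j+d) (by omega)
    have h2 := iterB_len_anti x (j+d) (j+d+1) (by omega)
    have hnu : nuI x (j+d+1) = (iterB x (j+d)).length / 2 - (iterB x (j+d+1)).length / 2 := by
      simp [nuI]
    rw [hnu]
    omega

lemma lamI_mono (x : List ℝ) (hx : ∀ t ∈ x, 0 < t) : Monotone (lamI x) := by
  intro a b hab
  exact Finset.sum_le_sum_of_subset_of_nonneg (Finset.range_subset_range.2 hab)
    (fun j _ _ => minL_iter_nonneg x hx j)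

/-- Each quantum number `r⁽ⁱ⁾_j = ∑_{l < I⁽ⁱ⁾_j} y⁽ⁱ⁾_l` (the sum of the entries of
`y⁽ⁱ⁾` preceding the `j`-th run of zeros) lies between `0` and the vacancy number
`q_i`. -/
theorem quantum_numbers_bounded (N : ℕ) (hN : 1 ≤ N) (L : ℝ) (x : List ℝ)
    (hlen : x.length = 2 * N) (hpos : ∀ t ∈ x, 0 < t) (hhwc : HWC x)
    (hsum : x.sum ≤ L) :
    ∀ i, 1 ≤ i → i ≤ uSteps x → ∀ p ∈ runStarts (yI x i),
      0 ≤ ((yI x i).take p).sum ∧ ((yI x i).take p).sum ≤ vacancy x L i := by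
  intro i hi1 hiu p _
  have hynn : ∀ t ∈ yI x i, 0 ≤ t := by
    intro t ht
    obtain ⟨s, hs, rfl⟩ := List.mem_map.1 ht
    have := minL_le hs
    simp only [muI]
    linarith
  constructor
  · exact List.sum_nonneg (fun t ht => hynn t (List.take_subset _ _ ht))
  · have hsplit : ((yI x i).take p).sum ≤ (yI x i).sum := by
      conv_rhs => rw [← List.take_append_drop p (yI x i)]
      rw [List.sum_append]
      have : 0 ≤ ((yI x i).drop p).sum :=
        List.sum_nonneg (fun t ht => hynn t (List.drop_subset _ _ ht))
      linarith
    refine le_trans hsplit ?_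
    have hysum : (yI x i).sum = (iterB x (i-1)).sum
        - (iterB x (i-1)).length * minL (iterB x (i-1)) := by
      rw [yI, muI, sum_map_sub]
    have hchain := sum_chain x (i-1)
    have hkey : (yI x i).sum ≤
        L - ∑ t ∈ Finset.range i, ((iterB x t).length : ℝ) * minL (iterB x t) := by
      rw [hysum]
      have hsr : ∑ t ∈ Finset.range i, ((iterB x t).length : ℝ) * minL (iterB x t)
          = ∑ t ∈ Finset.range (i-1), ((iterB x t).length : ℝ) * minL (iterB x t)
            + (iterB x (i-1)).length * minL (iterB x (i-1)) := by
        have hi' : i = (i-1) + 1 := by omega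
        have h := Finset.sum_range_succ
          (fun t => ((iterB x t).length : ℝ) * minL (iterB x t)) (i-1)
        rw [← hi'] at h
        exact h
      rw [hsr]; linarith
    refine le_trans hkey ?_
    rw [vacancy]
    have hmin : ∀ k, min (lamI x i) (lamI x k) = lamI x (min i k) := by
      intro k
      rcases le_total i k with h | h
      · rw [min_eq_left (lamI_mono x hpos h), min_eq_left h]
      · rw [min_eq_right (lamI_mono x hpos h), min_eq_right h]
    have hrange : ∀ k, Finset.range (min i k) = (Finset.range i).filter (fun j => j < k) := by
      intro k; ext j; simp only [Finset.mem_range, Finset.mem_filter]; omega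
    have hfilter : ∀ j, (Finset.Icc 1 (uSteps x)).filter (fun k => j < k)
        = Finset.Icc (j+1) (uSteps x) := by
      intro j; ext k; simp only [Finset.mem_filter, Finset.mem_Icc]; omega
    have hswap : ∑ k ∈ Finset.Icc 1 (uSteps x), min (lamI x i) (lamI x k) * (nuI x k : ℝ)
        = ∑ j ∈ Finset.range i,
            minL (iterB x j) * ∑ k ∈ Finset.Icc (j+1) (uSteps x), (nuI x k : ℝ) := by
      have step1 : ∀ k, min (lamI x i) (lamI x k) * (nuI x k : ℝ)
          = ∑ j ∈ Finset.range i,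
              (if j < k then minL (iterB x j) * (nuI x k : ℝ) else 0) := by
        intro k
        rw [hmin k, lamI, hrange k, Finset.sum_mul, Finset.sum_filter]
      calc ∑ k ∈ Finset.Icc 1 (uSteps x), min (lamI x i) (lamI x k) * (nuI x k : ℝ)
          = ∑ k ∈ Finset.Icc 1 (uSteps x), ∑ j ∈ Finset.range i,
              (if j < k then minL (iterB x j) * (nuI x k : ℝ) else 0) :=
            Finset.sum_congr rfl (fun k _ => step1 k)
        _ = ∑ j ∈ Finset.range i, ∑ k ∈ Finset.Icc 1 (uSteps x),
              (if j < k then minL (iterB x j) * (nuI x k : ℝ) else 0) := Finset.sum_comm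
        _ = ∑ j ∈ Finset.range i,
              minL (iterB x j) * ∑ k ∈ Finset.Icc (j+1) (uSteps x), (nuI x k : ℝ) := by
            refine Finset.sum_congr rfl (fun j _ => ?_)
            rw [← Finset.sum_filter, hfilter j, Finset.mul_sum]
    rw [hswap]
    have hterm : ∀ j ∈ Finset.range i,
        2 * (minL (iterB x j) * ∑ k ∈ Finset.Icc (j+1) (uSteps x), (nuI x k : ℝ))
        ≤ ((iterB x j).length : ℝ) * minL (iterB x j) := by
      intro j hj
      have hji : j < i := Finset.mem_range.1 hj
      have hju : j ≤ uSteps x := by omega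
      have hns := nu_sum x (uSteps x - j) j
      rw [show j + (uSteps x - j) = uSteps x by omega] at hns
      have hu0 : (iterB x (uSteps x)).length = 0 := by rw [uSteps_empty]; rfl
      have hsumnat : ∑ k ∈ Finset.Icc (j+1) (uSteps x), nuI x k
          = (iterB x j).length / 2 := by rw [hns, hu0]; omega
      have hcast : ∑ k ∈ Finset.Icc (j+1) (uSteps x), (nuI x k : ℝ)
          = (((iterB x j).length / 2 : ℕ) : ℝ) := by
        rw [← Nat.cast_sum, hsumnat]
      rw [hcast]
      have hm := minL_iter_nonneg x hpos j
      have h2 : (2 * (((iterB x j).length / 2 : ℕ) : ℝ)) ≤ ((iterB x j).length : ℝ) := by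
        have h3 : 2 * ((iterB x j).length / 2) ≤ (iterB x j).length := by omega
        exact_mod_cast h3
      nlinarith [hm, h2]
    have hfin : 2 * ∑ j ∈ Finset.range i,
          minL (iterB x j) * ∑ k ∈ Finset.Icc (j+1) (uSteps x), (nuI x k : ℝ)
        ≤ ∑ t ∈ Finset.range i, ((iterB x t).length : ℝ) * minL (iterB x t) := by
      rw [Finset.mul_sum]
      exact Finset.sum_le_sum hterm
    linarith
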